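/- Let a_1, a_2, a_3 be odd positive integers with gcd(a_1, a_2, a_3) = 1. Then the quotient ⟨a_1, a_2, a_3⟩/2 equals the numerical semigroup generated by a_1, a_2, a_3, (a_1 + a_2)/2, (a_1 + a_3)/2, and (a_2 + a_3)/2. -/

import Mathlib

lemma mul_mem_closure' {s : Set ℕ} {a : ℕ} (h : a ∈ s) (n : ℕ) :
    n * a ∈ AddSubmonoid.closure s := by
  simpa [nsmul_eq_mul] using
    nsmul_mem (AddSubmonoid.subset_closure h) n

lemma mem_closure_triple {a b c n : ℕ}
    (h : n ∈ AddSubmonoid.closure ({a, b, c} : Set ℕ)) :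
    ∃ x y z, n = x * a + y * b + z * c := by
  induction h using AddSubmonoid.closure_induction with
  | mem w hw =>
    rcases hw with h | h | h <;> subst h
    exacts [⟨1, 0, 0, by ring⟩, ⟨0, 1, 0, by ring⟩, ⟨0, 0, 1, by ring⟩]
  | zero => exact ⟨0, 0, 0, by ring⟩
  | add u v _ _ ihu ihv =>
    obtain ⟨x, y, z, rfl⟩ := ihu
    obtain ⟨x', y', z', rfl⟩ := ihv
    exact ⟨x + x', y + y', z + z', by ring⟩

/-- Table 1, row (p,t₁,t₂,t₃) = (2,1,1,1): for odd `a₁, a₂, a₃` with gcd 1,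
`⟨a₁, a₂, a₃⟩/2 = ⟨a₁, a₂, a₃, (a₁+a₂)/2, (a₁+a₃)/2, (a₂+a₃)/2⟩`. -/
theorem quotient_two_ooo
    (a₁ a₂ a₃ : ℕ) (h₁ : 0 < a₁) (h₂ : 0 < a₂) (h₃ : 0 < a₃)
    (hgcd : Nat.gcd a₁ (Nat.gcd a₂ a₃) = 1)
    (ho₁ : Odd a₁) (ho₂ : Odd a₂) (ho₃ : Odd a₃) :
    {m : ℕ | 2 * m ∈ AddSubmonoid.closure ({a₁, a₂, a₃} : Set ℕ)} =
      ↑(AddSubmonoid.closure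
        ({a₁, a₂, a₃, (a₁ + a₂) / 2, (a₁ + a₃) / 2, (a₂ + a₃) / 2} : Set ℕ)) := by
  obtain ⟨b₁, hb₁⟩ := ho₁
  obtain ⟨b₂, hb₂⟩ := ho₂
  obtain ⟨b₃, hb₃⟩ := ho₃
  obtain ⟨t₁₂, ht₁₂⟩ : Even (a₁ + a₂) := by rw [hb₁, hb₂]; exact ⟨b₁ + b₂ + 1, by ring⟩
  obtain ⟨t₁₃, ht₁₃⟩ : Even (a₁ + a₃) := by rw [hb₁, hb₃]; exact ⟨b₁ + b₃ + 1, by ring⟩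
  obtain ⟨t₂₃, ht₂₃⟩ : Even (a₂ + a₃) := by rw [hb₂, hb₃]; exact ⟨b₂ + b₃ + 1, by ring⟩
  have hd₁₂ : (a₁ + a₂) / 2 = t₁₂ := by omega
  have hd₁₃ : (a₁ + a₃) / 2 = t₁₃ := by omega
  have hd₂₃ : (a₂ + a₃) / 2 = t₂₃ := by omega
  set G : Set ℕ := {a₁, a₂, a₃, (a₁ + a₂) / 2, (a₁ + a₃) / 2, (a₂ + a₃) / 2} with hG
  have hg₁ : a₁ ∈ G := by simp [hG]
  have hg₂ : a₂ ∈ G := by simp [hG]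
  have hg₃ : a₃ ∈ G := by simp [hG]
  have hg₁₂ : t₁₂ ∈ G := by rw [← hd₁₂]; simp [hG]
  have hg₁₃ : t₁₃ ∈ G := by rw [← hd₁₃]; simp [hG]
  have hg₂₃ : t₂₃ ∈ G := by rw [← hd₂₃]; simp [hG]
  ext m
  simp only [Set.mem_setOf_eq, SetLike.mem_coe]
  constructor
  · intro hm
    obtain ⟨x, y, z, heq⟩ := mem_closure_triple hm
    have hpar : 2 * m = 2 * (x * b₁) + x + 2 * (y * b₂) + y + 2 * (z * b₃) + z := by
      rw [heq, hb₁, hb₂, hb₃]; ring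
    rcases Nat.even_or_odd x with ⟨p, hx⟩ | ⟨p, hx⟩ <;>
      rcases Nat.even_or_odd y with ⟨q, hy⟩ | ⟨q, hy⟩ <;>
      rcases Nat.even_or_odd z with ⟨r, hz⟩ | ⟨r, hz⟩
    · -- e e e
      have h2 : 2 * m = 2 * (p * a₁ + q * a₂ + r * a₃) := by
        rw [heq, hx, hy, hz]; ring
      have hm' : m = p * a₁ + q * a₂ + r * a₃ := by omega
      rw [hm']
      exact add_mem (add_mem (mul_mem_closure' hg₁ p) (mul_mem_closure' hg₂ q))
        (mul_mem_closure' hg₃ r)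
    · -- e e o : impossible
      exfalso; omega
    · -- e o e : impossible
      exfalso; omega
    · -- e o o
      have h2 : 2 * m = 2 * (p * a₁ + q * a₂ + r * a₃ + t₂₃) := by
        rw [heq, hx, hy, hz,
          show (p + p) * a₁ + (2 * q + 1) * a₂ + (2 * r + 1) * a₃
            = 2 * (p * a₁ + q * a₂ + r * a₃) + (a₂ + a₃) from by ring, ht₂₃]
        ring
      have hm' : m = p * a₁ + q * a₂ + r * a₃ + t₂₃ := by omega
      rw [hm']
      exact add_mem (add_mem (add_mem (mul_mem_closure' hg₁ p) (mul_mem_closure' hg₂ q))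
        (mul_mem_closure' hg₃ r)) (AddSubmonoid.subset_closure hg₂₃)
    · -- o e e : impossible
      exfalso; omega
    · -- o e o
      have h2 : 2 * m = 2 * (p * a₁ + q * a₂ + r * a₃ + t₁₃) := by
        rw [heq, hx, hy, hz,
          show (2 * p + 1) * a₁ + (q + q) * a₂ + (2 * r + 1) * a₃
            = 2 * (p * a₁ + q * a₂ + r * a₃) + (a₁ + a₃) from by ring, ht₁₃]
        ring
      have hm' : m = p * a₁ + q * a₂ + r * a₃ + t₁₃ := by omega
      rw [hm']
      exact add_mem (add_mem (add_mem (mul_mem_closure' hg₁ p) (mul_mem_closure' hg₂ q))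
        (mul_mem_closure' hg₃ r)) (AddSubmonoid.subset_closure hg₁₃)
    · -- o o e
      have h2 : 2 * m = 2 * (p * a₁ + q * a₂ + r * a₃ + t₁₂) := by
        rw [heq, hx, hy, hz,
          show (2 * p + 1) * a₁ + (2 * q + 1) * a₂ + (r + r) * a₃
            = 2 * (p * a₁ + q * a₂ + r * a₃) + (a₁ + a₂) from by ring, ht₁₂]
        ring
      have hm' : m = p * a₁ + q * a₂ + r * a₃ + t₁₂ := by omega
      rw [hm']
      exact add_mem (add_mem (add_mem (mul_mem_closure' hg₁ p) (mul_mem_closure' hg₂ q))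
        (mul_mem_closure' hg₃ r)) (AddSubmonoid.subset_closure hg₁₂)
    · -- o o o : impossible
      exfalso; omega
  · intro hm
    have key : ∀ n ∈ AddSubmonoid.closure G,
        2 * n ∈ AddSubmonoid.closure ({a₁, a₂, a₃} : Set ℕ) := by
      intro n hn
      induction hn using AddSubmonoid.closure_induction with
      | mem w hw =>
        have mem₁ : a₁ ∈ ({a₁, a₂, a₃} : Set ℕ) := by simp
        have mem₂ : a₂ ∈ ({a₁, a₂, a₃} : Set ℕ) := by simp
        have mem₃ : a₃ ∈ ({a₁, a₂, a₃} : Set ℕ) := by simp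
        rcases hw with h | h | h | h | h | h <;> rw [h]
        · rw [show 2 * a₁ = a₁ + a₁ from by ring]
          exact add_mem (AddSubmonoid.subset_closure mem₁) (AddSubmonoid.subset_closure mem₁)
        · rw [show 2 * a₂ = a₂ + a₂ from by ring]
          exact add_mem (AddSubmonoid.subset_closure mem₂) (AddSubmonoid.subset_closure mem₂)
        · rw [show 2 * a₃ = a₃ + a₃ from by ring]
          exact add_mem (AddSubmonoid.subset_closure mem₃) (AddSubmonoid.subset_closure mem₃)
        · rw [hd₁₂, show 2 * t₁₂ = t₁₂ + t₁₂ from by ring, ← ht₁₂]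
          exact add_mem (AddSubmonoid.subset_closure mem₁) (AddSubmonoid.subset_closure mem₂)
        · rw [hd₁₃, show 2 * t₁₃ = t₁₃ + t₁₃ from by ring, ← ht₁₃]
          exact add_mem (AddSubmonoid.subset_closure mem₁) (AddSubmonoid.subset_closure mem₃)
        · rw [hd₂₃, show 2 * t₂₃ = t₂₃ + t₂₃ from by ring, ← ht₂₃]
          exact add_mem (AddSubmonoid.subset_closure mem₂) (AddSubmonoid.subset_closure mem₃)
      | zero => simpa using AddSubmonoid.zero_mem _
      | add u v _ _ ihu ihv =>
        rw [show 2 * (u + v) = 2 * u + 2 * v from by ring]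
        exact add_mem ihu ihv
    exact key m hm
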